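/- If X_A and X_B are conditionally independent given X_C, and for each j ∈ A the conditional distribution of (X_A, X̃_A) given X_C is invariant under swapping coordinate j, and (X_A, X̃_A) is conditionally independent of (X_B, X̃_B) given X_C, then for each j ∈ A, the conditional distribution of (X_A, X_B, X̃_A, X̃_B) given X_C is invariant under swapping X_j and X̃_j. -/

import Mathlib

open MeasureTheory ProbabilityTheory

/-- Restriction of a vector-valued map to the coordinates in `D`. -/
def restr {Ω : Type*} {p : ℕ} (D : Finset (Fin p)) (X : Ω → Fin p → ℝ) :
    Ω → {i : Fin p // i ∈ D} → ℝ :=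
  fun ω i => X ω i

/-- Swap the coordinate `j ∈ D` of a pair of `D`-indexed vectors. -/
noncomputable def swapBlock {p : ℕ} (D : Finset (Fin p)) (j : Fin p)
    (hj : j ∈ D) :
    (({i : Fin p // i ∈ D} → ℝ) × ({i : Fin p // i ∈ D} → ℝ)) →
      (({i : Fin p // i ∈ D} → ℝ) × ({i : Fin p // i ∈ D} → ℝ)) :=
  fun z => (Function.update z.1 ⟨j, hj⟩ (z.2 ⟨j, hj⟩),
            Function.update z.2 ⟨j, hj⟩ (z.1 ⟨j, hj⟩))

section Aux

open MeasurableSpace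

lemma measurable_restr {Ω : Type*} [MeasurableSpace Ω] {p : ℕ} (D : Finset (Fin p))
    {X : Ω → Fin p → ℝ} (hX : Measurable X) : Measurable (restr D X) :=
  measurable_pi_lambda _ fun i => (measurable_pi_apply (i : Fin p)).comp hX

lemma measurable_swapBlock {p : ℕ} (D : Finset (Fin p)) (j : Fin p) (hj : j ∈ D) :
    Measurable (swapBlock D j hj) := by
  unfold swapBlock
  refine Measurable.prodMk ?_ ?_
  · refine measurable_pi_lambda _ fun i => ?_
    simp only [Function.update_apply]
    split_ifs with h
    · exact (measurable_pi_apply _).comp measurable_snd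
    · exact (measurable_pi_apply _).comp measurable_fst
  · refine measurable_pi_lambda _ fun i => ?_
    simp only [Function.update_apply]
    split_ifs with h
    · exact (measurable_pi_apply _).comp measurable_fst
    · exact (measurable_pi_apply _).comp measurable_snd

/-- Conditional expectation of the indicator of `S` given `σ(Z)`. -/
noncomputable def ceInd {Ω β : Type*} [MeasurableSpace Ω] [MeasurableSpace β]
    (μ : Measure Ω) (Z : Ω → β) (S : Set Ω) : Ω → ℝ :=
  MeasureTheory.condExp (MeasurableSpace.comap Z inferInstance) μ
    (S.indicator fun _ => (1 : ℝ))

lemma aux_condIndep_map_eq {Ω γ δ ε : Type*} [mΩ : MeasurableSpace Ω] [StandardBorelSpace Ω]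
    [MeasurableSpace γ] [MeasurableSpace δ] [MeasurableSpace ε]
    (μ : Measure Ω) [IsProbabilityMeasure μ]
    (Z : Ω → γ) (U U' : Ω → δ) (V : Ω → ε)
    (hZ : Measurable Z) (hU : Measurable U) (hU' : Measurable U') (hV : Measurable V)
    (hm' : MeasurableSpace.comap Z inferInstance ≤ mΩ)
    (hCI : CondIndepFun (MeasurableSpace.comap Z inferInstance) hm' U V μ)
    (hCI' : CondIndepFun (MeasurableSpace.comap Z inferInstance) hm' U' V μ)
    (hmap : μ.map (fun ω => (Z ω, U' ω)) = μ.map (fun ω => (Z ω, U ω))) :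
    μ.map (fun ω => (Z ω, U' ω, V ω)) = μ.map (fun ω => (Z ω, U ω, V ω)) := by
  -- Step 1: the conditional expectations of indicators agree.
  have hcond : ∀ t : Set δ, MeasurableSet t →
      ceInd μ Z (U' ⁻¹' t) =ᵐ[μ] ceInd μ Z (U ⁻¹' t) := by
    intro t ht
    refine ae_eq_condExp_of_forall_setIntegral_eq hm'
      ((integrable_const (1 : ℝ)).indicator (hU ht))
      (fun s _ _ => integrable_condExp.integrableOn) (fun s hs _ => ?_)
      stronglyMeasurable_condExp.aestronglyMeasurable
    obtain ⟨s', hs', rfl⟩ := hs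
    refine (setIntegral_condExp hm'
      ((integrable_const (1 : ℝ)).indicator (hU' ht)) ⟨s', hs', rfl⟩).trans ?_
    have key : μ (Z ⁻¹' s' ∩ U' ⁻¹' t) = μ (Z ⁻¹' s' ∩ U ⁻¹' t) := by
      have h1 : μ (Z ⁻¹' s' ∩ U' ⁻¹' t) = μ.map (fun ω => (Z ω, U' ω)) (s' ×ˢ t) := by
        rw [Measure.map_apply (hZ.prodMk hU') (hs'.prod ht), Set.mk_preimage_prod]
      have h2 : μ (Z ⁻¹' s' ∩ U ⁻¹' t) = μ.map (fun ω => (Z ω, U ω)) (s' ×ˢ t) := by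
        rw [Measure.map_apply (hZ.prodMk hU) (hs'.prod ht), Set.mk_preimage_prod]
      rw [h1, h2, hmap]
    rw [setIntegral_indicator (hU' ht), setIntegral_indicator (hU ht),
      setIntegral_const, setIntegral_const]
    simp only [Measure.real, key]
  -- Step 2: equality on measurable rectangles.
  have hrect : ∀ (s : Set γ) (t : Set δ) (u : Set ε), MeasurableSet s → MeasurableSet t →
      MeasurableSet u →
      μ.map (fun ω => (Z ω, U' ω, V ω)) (s ×ˢ t ×ˢ u)
        = μ.map (fun ω => (Z ω, U ω, V ω)) (s ×ˢ t ×ˢ u) := by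
    intro s t u hs ht hu
    rw [Measure.map_apply (hZ.prodMk (hU'.prodMk hV)) (hs.prod (ht.prod hu)),
      Measure.map_apply (hZ.prodMk (hU.prodMk hV)) (hs.prod (ht.prod hu))]
    have hpre : ∀ W : Ω → δ,
        (fun ω => (Z ω, W ω, V ω)) ⁻¹' (s ×ˢ t ×ˢ u)
          = Z ⁻¹' s ∩ (W ⁻¹' t ∩ V ⁻¹' u) := by
      intro W; ext ω; simp [Set.mem_prod, and_assoc]
    rw [hpre, hpre]
    have h2 : ∀ W : Ω → δ, Measurable W →
        CondIndepFun (MeasurableSpace.comap Z inferInstance) hm' W V μ →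
        (μ (Z ⁻¹' s ∩ (W ⁻¹' t ∩ V ⁻¹' u))).toReal
          = ∫ x in Z ⁻¹' s,
              (ceInd μ Z (W ⁻¹' t) x) * (ceInd μ Z (V ⁻¹' u) x) ∂μ := by
      intro W hW hCIW
      have hmeas : MeasurableSet (W ⁻¹' t ∩ V ⁻¹' u) := (hW ht).inter (hV hu)
      have hind : Integrable ((W ⁻¹' t ∩ V ⁻¹' u).indicator (fun _ => (1 : ℝ))) μ :=
        (integrable_const (1 : ℝ)).indicator hmeas
      have e1 : (μ (Z ⁻¹' s ∩ (W ⁻¹' t ∩ V ⁻¹' u))).toReal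
          = ∫ x in Z ⁻¹' s, (W ⁻¹' t ∩ V ⁻¹' u).indicator (fun _ => (1 : ℝ)) x ∂μ := by
        rw [setIntegral_indicator hmeas, setIntegral_const]; simp; rfl
      rw [e1]
      have hmul := (condIndepFun_iff_condExp_inter_preimage_eq_mul hW hV).mp hCIW t u ht hu
      exact ((setIntegral_condExp hm' hind ⟨s, hs, rfl⟩).symm.trans
        (integral_congr_ae (ae_restrict_of_ae hmul)))
    refine (ENNReal.toReal_eq_toReal_iff' (measure_ne_top _ _) (measure_ne_top _ _)).mp ?_
    rw [h2 U' hU' hCI', h2 U hU hCI]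
    refine integral_congr_ae ?_
    filter_upwards [ae_restrict_of_ae (hcond t ht)] with x hx
    rw [hx]
  -- Step 3: π-system argument.
  have hPgen : (inferInstance : MeasurableSpace (γ × δ × ε)) = MeasurableSpace.generateFrom
      (Set.image2 (· ×ˢ ·) {s : Set γ | MeasurableSet s}
        (Set.image2 (· ×ˢ ·) {t : Set δ | MeasurableSet t} {u : Set ε | MeasurableSet u})) :=
    (generateFrom_eq_prod generateFrom_measurableSet generateFrom_prod
      isCountablySpanning_measurableSet
      (isCountablySpanning_measurableSet.prod isCountablySpanning_measurableSet)).symm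
  haveI : IsProbabilityMeasure (μ.map (fun ω => (Z ω, U' ω, V ω))) :=
    Measure.isProbabilityMeasure_map (hZ.prodMk (hU'.prodMk hV)).aemeasurable
  haveI : IsProbabilityMeasure (μ.map (fun ω => (Z ω, U ω, V ω))) :=
    Measure.isProbabilityMeasure_map (hZ.prodMk (hU.prodMk hV)).aemeasurable
  refine ext_of_generate_finite _ hPgen
    (isPiSystem_measurableSet.prod isPiSystem_prod) ?_ (by simp)
  rintro _ ⟨s, hs, r, ⟨t, ht, u, hu, rfl⟩, rfl⟩
  exact hrect s t u hs ht hu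

end Aux

/-- If `X_A ⊥ X_B | X_C`, the conditional law of `(X_A, X̃_A)` given `X_C` is
invariant under swapping any coordinate `j ∈ A`, and
`(X_A, X̃_A) ⊥ (X_B, X̃_B) | X_C`, then for each `j ∈ A` the conditional law of
`(X_A, X_B, X̃_A, X̃_B)` given `X_C` (encoded here by the joint law together
with `X_C`) is invariant under swapping `X_j` and `X̃_j`. -/
theorem stmt12 {Ω : Type*} [MeasurableSpace Ω] [StandardBorelSpace Ω]
    (μ : Measure Ω) [IsProbabilityMeasure μ] {p : ℕ}
    (A B C : Finset (Fin p))
    (hAB : Disjoint A B) (hAC : Disjoint A C) (hBC : Disjoint B C)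
    (X Xt : Ω → Fin p → ℝ) (hX : Measurable X) (hXt : Measurable Xt)
    (hXC : Measurable (restr C X))
    (hCI : CondIndepFun (MeasurableSpace.comap (restr C X) inferInstance)
      (MeasurableSpace.comap_le_iff_le_map.2 hXC.le_map)
      (restr A X) (restr B X) μ)
    (hCIknock : CondIndepFun
      (MeasurableSpace.comap (restr C X) inferInstance)
      (MeasurableSpace.comap_le_iff_le_map.2 hXC.le_map)
      (fun ω => (restr A X ω, restr A Xt ω))
      (fun ω => (restr B X ω, restr B Xt ω)) μ)
    (hswapA : ∀ (j : Fin p) (hj : j ∈ A),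
      μ.map (fun ω => (restr C X ω,
          swapBlock A j hj (restr A X ω, restr A Xt ω))) =
        μ.map (fun ω => (restr C X ω, (restr A X ω, restr A Xt ω)))) :
    ∀ (j : Fin p) (hj : j ∈ A),
      μ.map (fun ω => (restr C X ω,
          swapBlock A j hj (restr A X ω, restr A Xt ω),
          restr B X ω, restr B Xt ω)) =
        μ.map (fun ω => (restr C X ω,
          (restr A X ω, restr A Xt ω),
          restr B X ω, restr B Xt ω)) := by
  intro j hj
  exact aux_condIndep_map_eq μ (restr C X)
    (fun ω => (restr A X ω, restr A Xt ω))
    (fun ω => swapBlock A j hj (restr A X ω, restr A Xt ω))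
    (fun ω => (restr B X ω, restr B Xt ω))
    hXC ((measurable_restr A hX).prodMk (measurable_restr A hXt))
    ((measurable_swapBlock A j hj).comp
      ((measurable_restr A hX).prodMk (measurable_restr A hXt)))
    ((measurable_restr B hX).prodMk (measurable_restr B hXt))
    (MeasurableSpace.comap_le_iff_le_map.2 hXC.le_map)
    hCIknock
    (hCIknock.comp (measurable_swapBlock A j hj) measurable_id)
    (hswapA j hj)
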